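/- Let 𝒳 be a nonempty finite set, let p(x|x') be a strictly positive Markov kernel on 𝒳 with a strictly positive stationary distribution p(x), let q(x'|x) be a strictly positive Markov kernel on 𝒳 and let q₁ be a probability distribution on 𝒳. If there is δ > 0 such that KL(q(·|x) ‖ p^r(·|x)) ≥ δ for every x ∈ 𝒳, then the gap between the likelihood and the lower bound grows at least linearly in the chain length: L − L_B(n) ≥ n·δ for every n ≥ 1, where L = Σ_x q₁(x) log p(x), L_B(n) = Σ_x q_{n+1}(x) log p(x) + n Σ_{x,x'} q(x'|x) Q_n(x) [log p(x|x') − log q(x'|x)], and p^r(x'|x) = p(x|x') p(x') / p(x). -/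

import Mathlib

open Finset

/-- `qIter q q1 k` is the distribution `q_{k+1}` obtained from the data distribution
`q₁ = qIter q q1 0` by `k` applications of the Markov kernel `q`,
where `q x x'` denotes `q(x | x')`, i.e. the transition probability from `x'` to `x`. -/
noncomputable def qIter {X : Type} [Fintype X] (q : X → X → ℝ) (q1 : X → ℝ) : ℕ → X → ℝ
  | 0 => q1
  | k + 1 => fun x => ∑ x' : X, q x x' * qIter q q1 k x'

/-- `Qavg q q1 n x = Q_n(x) = (1/n) ∑_{k=1}^n q_k(x)`. -/
noncomputable def Qavg {X : Type} [Fintype X] (q : X → X → ℝ) (q1 : X → ℝ) (n : ℕ) (x : X) : ℝ :=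
  (1 / (n : ℝ)) * ∑ k ∈ Finset.range n, qIter q q1 k x

/-- if the KL divergence from `q(·|x)` to the reverse kernel
`p^r(x'|x) = p(x|x') p(x') / p(x)` is at least `δ > 0` for every `x`, then the gap
between the likelihood and the lower bound grows at least linearly:
`L − L_B(n) ≥ n·δ` for every `n ≥ 1`. -/
theorem likelihood_lower_bound_gap_grows_linearly
    {X : Type} [Fintype X] [Nonempty X]
    (p : X → X → ℝ) (pd : X → ℝ) (q : X → X → ℝ) (q1 : X → ℝ)
    (hp_pos : ∀ x x' : X, 0 < p x x')
    (hp_kernel : ∀ x' : X, ∑ x : X, p x x' = 1)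
    (hpd_pos : ∀ x, 0 < pd x)
    (hpd_sum : ∑ x : X, pd x = 1)
    (hpd_stat : ∀ x, pd x = ∑ x' : X, p x x' * pd x')
    (hq_pos : ∀ x' x : X, 0 < q x' x)
    (hq_kernel : ∀ x : X, ∑ x' : X, q x' x = 1)
    (hq1_nonneg : ∀ x, 0 ≤ q1 x)
    (hq1_sum : ∑ x : X, q1 x = 1)
    (n : ℕ) (hn : 1 ≤ n)
    (δ : ℝ) (hδ : 0 < δ)
    (hKL : ∀ x : X, δ ≤ ∑ x' : X, q x' x * Real.log (q x' x / (p x x' * pd x' / pd x))) :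
    (n : ℝ) * δ ≤
      (∑ x : X, q1 x * Real.log (pd x))
      - (∑ x : X, qIter q q1 n x * Real.log (pd x)
          + (n : ℝ) * ∑ x : X, ∑ x' : X,
              q x' x * Qavg q q1 n x * (Real.log (p x x') - Real.log (q x' x))) := by
  -- basic facts about the iterates
  have hIter : ∀ k, (∀ x, 0 ≤ qIter q q1 k x) ∧ (∑ x : X, qIter q q1 k x = 1) := by
    intro k
    induction k with
    | zero => exact ⟨hq1_nonneg, hq1_sum⟩
    | succ k ih =>
      constructor
      · intro x
        exact Finset.sum_nonneg fun x' _ => mul_nonneg (hq_pos x x').le (ih.1 x')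
      · have : (∑ x : X, qIter q q1 (k + 1) x)
            = ∑ x' : X, (∑ x : X, q x x') * qIter q q1 k x' := by
          show (∑ x : X, ∑ x' : X, q x x' * qIter q q1 k x') = _
          rw [Finset.sum_comm]
          exact Finset.sum_congr rfl fun x' _ => (Finset.sum_mul _ _ _).symm
        rw [this]
        simp only [hq_kernel]
        simpa using ih.2
  -- the KL-type quantity, fully expanded
  set D : X → ℝ := fun x => ∑ x' : X, q x' x *
      (Real.log (q x' x) - Real.log (p x x') - Real.log (pd x') + Real.log (pd x)) with hD
  have hKL' : ∀ x, δ ≤ D x := by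
    intro x
    refine le_trans (hKL x) (le_of_eq (Finset.sum_congr rfl fun x' _ => ?_))
    congr 1
    rw [Real.log_div (hq_pos x' x).ne'
        (div_pos (mul_pos (hp_pos x x') (hpd_pos x')) (hpd_pos x)).ne',
      Real.log_div (mul_pos (hp_pos x x') (hpd_pos x')).ne' (hpd_pos x).ne',
      Real.log_mul (hp_pos x x').ne' (hpd_pos x').ne']
    ring
  set S : ℕ → ℝ := fun k => ∑ x : X, qIter q q1 k x * Real.log (pd x) with hS
  set T : ℕ → ℝ := fun k => ∑ x : X, ∑ x' : X,
      qIter q q1 k x * (q x' x * (Real.log (p x x') - Real.log (q x' x))) with hT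
  have key : ∀ k, ∑ x : X, qIter q q1 k x * D x = S k - S (k + 1) - T k := by
    intro k
    have h1 : ∑ x : X, qIter q q1 k x * D x =
        (∑ x : X, ∑ x' : X, qIter q q1 k x * q x' x * Real.log (pd x))
        - (∑ x : X, ∑ x' : X, qIter q q1 k x * q x' x * Real.log (pd x'))
        - ∑ x : X, ∑ x' : X,
            qIter q q1 k x * (q x' x * (Real.log (p x x') - Real.log (q x' x))) := by
      rw [← Finset.sum_sub_distrib, ← Finset.sum_sub_distrib]
      refine Finset.sum_congr rfl fun x _ => ?_
      rw [hD]
      simp only [Finset.mul_sum, ← Finset.sum_sub_distrib]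
      exact Finset.sum_congr rfl fun x' _ => by ring
    rw [h1, hS, hT]
    congr 1
    congr 1
    · refine Finset.sum_congr rfl fun x _ => ?_
      have : (∑ x' : X, qIter q q1 k x * q x' x * Real.log (pd x))
          = (∑ x' : X, q x' x) * (qIter q q1 k x * Real.log (pd x)) := by
        rw [Finset.sum_mul]
        exact Finset.sum_congr rfl fun x' _ => by ring
      rw [this, hq_kernel, one_mul]
    · rw [Finset.sum_comm]
      refine Finset.sum_congr rfl fun x' _ => ?_
      have : (∑ x : X, qIter q q1 k x * q x' x * Real.log (pd x'))
          = (∑ x : X, q x' x * qIter q q1 k x) * Real.log (pd x') := by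
        rw [Finset.sum_mul]
        exact Finset.sum_congr rfl fun x _ => by ring
      rw [this]
      rfl
  -- rewrite the RHS n-fold sum in terms of T
  have hn' : (n : ℝ) ≠ 0 := by positivity
  have hTsum : (n : ℝ) * ∑ x : X, ∑ x' : X,
      q x' x * Qavg q q1 n x * (Real.log (p x x') - Real.log (q x' x))
      = ∑ k ∈ Finset.range n, T k := by
    have hswap : ∑ k ∈ Finset.range n, T k
        = ∑ x : X, ∑ x' : X, (∑ k ∈ Finset.range n, qIter q q1 k x)
            * (q x' x * (Real.log (p x x') - Real.log (q x' x))) := by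
      rw [hT, Finset.sum_comm]
      refine Finset.sum_congr rfl fun x _ => ?_
      rw [Finset.sum_comm]
      refine Finset.sum_congr rfl fun x' _ => ?_
      rw [Finset.sum_mul]
    rw [hswap, Finset.mul_sum]
    refine Finset.sum_congr rfl fun x _ => ?_
    rw [Finset.mul_sum]
    refine Finset.sum_congr rfl fun x' _ => ?_
    rw [Qavg]
    field_simp
  have htel : ∑ k ∈ Finset.range n, (S k - S (k + 1)) = S 0 - S n :=
    Finset.sum_range_sub' S n
  have hq1S : S 0 = ∑ x : X, q1 x * Real.log (pd x) := rfl
  have hfinal : (∑ x : X, q1 x * Real.log (pd x))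
      - (∑ x : X, qIter q q1 n x * Real.log (pd x)
          + (n : ℝ) * ∑ x : X, ∑ x' : X,
              q x' x * Qavg q q1 n x * (Real.log (p x x') - Real.log (q x' x)))
      = ∑ k ∈ Finset.range n, ∑ x : X, qIter q q1 k x * D x := by
    rw [hTsum, ← hq1S]
    have : ∑ k ∈ Finset.range n, ∑ x : X, qIter q q1 k x * D x
        = ∑ k ∈ Finset.range n, ((S k - S (k + 1)) - T k) :=
      Finset.sum_congr rfl fun k _ => key k
    rw [this, Finset.sum_sub_distrib, htel]
    ring
  rw [hfinal]
  calc (n : ℝ) * δ = ∑ _k ∈ Finset.range n, δ := by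
        rw [Finset.sum_const, Finset.card_range, nsmul_eq_mul]
    _ ≤ ∑ k ∈ Finset.range n, ∑ x : X, qIter q q1 k x * D x := by
        refine Finset.sum_le_sum fun k _ => ?_
        have : δ = ∑ x : X, qIter q q1 k x * δ := by
          rw [← Finset.sum_mul, (hIter k).2, one_mul]
        rw [this]
        exact Finset.sum_le_sum fun x _ =>
          mul_le_mul_of_nonneg_left (hKL' x) ((hIter k).1 x)
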